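/- arXiv:2111.05201 — 3 statements merged into one kernel-verified Lean document; each statement's English description precedes it below -/
import Mathlib

section
/- Let γ := α(τ−1) < 1. Almost surely, for all N large enough: (i) the simplified graph \overline{G}_N is connected, and (ii) every edge of \overline{G}_N is also an edge of G_N, i.e. E(\overline{G}_N) ⊆ E(G_N). -/
open MeasureTheory ProbabilityTheory Real Filter
open scoped ENNReal Classical

noncomputable section

/-- Torus distance on `Fin N`: `min(|x-y|, N-|x-y|)`. -/
def torusDist (N : ℕ) (x y : Fin N) : ℕ :=
  min (Nat.dist x.val y.val) (N - Nat.dist x.val y.val)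

/-- The scale-free percolation graph on the torus `Fin N`, given the realized
weights `w` and uniform variables `u` (one per unordered pair): vertices at torus
distance `1` are always adjacent, and vertices at torus distance `≥ 2` are adjacent
iff the corresponding uniform variable does not exceed `1 - exp(-w x * w y / ‖x-y‖^α)`. -/
def sfpGraph (α : ℝ) (N : ℕ) (w : Fin N → ℝ) (u : Sym2 (Fin N) → ℝ) :
    SimpleGraph (Fin N) :=
  SimpleGraph.fromRel (fun x y =>
    torusDist N x y = 1 ∨
      (2 ≤ torusDist N x y ∧
        u s(x, y) ≤ 1 - Real.exp (-(w x * w y) * ((torusDist N x y : ℝ) ^ α)⁻¹)))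

/-- `μ` is the Pareto law with tail exponent `τ - 1`:
`μ {w ≥ t} = t^{-(τ-1)}` for `t ≥ 1` and `μ {w < 1} = 0`. -/
def IsParetoLaw (τ : ℝ) (μ : Measure ℝ) : Prop :=
  IsProbabilityMeasure μ ∧
    (∀ t : ℝ, 1 ≤ t → μ {w : ℝ | t ≤ w} = ENNReal.ofReal (t ^ (-(τ - 1)))) ∧
    μ {w : ℝ | w < 1} = 0

/-- The randomness driving a scale-free percolation graph on `Fin K` with parameters
`a` (distance exponent) and `t` (so weights are Pareto with exponent `t-1`):
i.i.d. Pareto weights, i.i.d. uniform-[0,1] pair variables, all jointly independent. -/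
structure SFPData (a t : ℝ) (K : ℕ) {Ω : Type*} [MeasurableSpace Ω] (P : Measure Ω) where
  W : Fin K → Ω → ℝ
  U : Sym2 (Fin K) → Ω → ℝ
  indep : iIndepFun (Sum.elim W U) P
  paretoW : ∀ x : Fin K, IsParetoLaw t (P.map (W x))
  uniformU : ∀ e : Sym2 (Fin K), P.map (U e) = volume.restrict (Set.Icc (0 : ℝ) 1)

/-- The scale-free percolation graph realized at `ω`. -/
def SFPData.graph {a t : ℝ} {K : ℕ} {Ω : Type*} [MeasurableSpace Ω] {P : Measure Ω}
    (D : SFPData a t K P) (ω : Ω) : SimpleGraph (Fin K) :=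
  sfpGraph a K (fun x => D.W x ω) (fun e => D.U e ω)

/-- A family, over all sizes `N`, of scale-free percolation graphs with parameters
`α, τ`, realized on a common probability space. -/
def SFPModel (α τ : ℝ) {Ω : Type*} [MeasurableSpace Ω] (P : Measure Ω) : Type _ :=
  ∀ N : ℕ, SFPData α τ N P

/-- The SFP graph `G_N` realized at `ω`. -/
def SFPModel.graph {α τ : ℝ} {Ω : Type*} [MeasurableSpace Ω] {P : Measure Ω}
    (M : SFPModel α τ P) (N : ℕ) (ω : Ω) : SimpleGraph (Fin N) :=
  (M N).graph ω

/-- The degree of a vertex. -/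
def deg {V : Type*} (G : SimpleGraph V) (x : V) : ℕ := Nat.card {y // G.Adj x y}

/-- The total degree (twice the number of edges). -/
def totalDeg {N : ℕ} (G : SimpleGraph (Fin N)) : ℕ := ∑ x, deg G x

/-- The number of edges. -/
def edgeCount {V : Type*} (G : SimpleGraph V) : ℕ := Nat.card G.edgeSet

/-- Transition matrix of the lazy simple random walk on a graph. -/
def lazyStep {N : ℕ} (G : SimpleGraph (Fin N)) : Matrix (Fin N) (Fin N) ℝ :=
  Matrix.of fun x y =>
    if x = y then 1 / 2 else if G.Adj x y then 1 / (2 * deg G x) else 0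

/-- Stationary distribution of the lazy simple random walk. -/
def statDist {N : ℕ} (G : SimpleGraph (Fin N)) (x : Fin N) : ℝ :=
  (deg G x : ℝ) / (totalDeg G : ℝ)

/-- Worst-case total variation distance to stationarity at time `n`. -/
def tvDist {N : ℕ} (G : SimpleGraph (Fin N)) (n : ℕ) : ℝ :=
  ⨆ x : Fin N, (1 / 2) * ∑ y, |((lazyStep G ^ n) x y) - statDist G y|

/-- Mixing time of the lazy simple random walk. -/
def mixingTime {N : ℕ} (G : SimpleGraph (Fin N)) : ℕ :=
  sInf {n : ℕ | tvDist G n < 1 / 4}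


/-- The simplified graph: `x ≠ y` are adjacent iff `W_x W_y ≥ N^α (log N)²`. -/
def simplifiedGraph (α : ℝ) (N : ℕ) (w : Fin N → ℝ) : SimpleGraph (Fin N) :=
  SimpleGraph.fromRel (fun x y => (N : ℝ) ^ α * Real.log N ^ 2 ≤ w x * w y)

/-- The simplified graph `\overline{G}_N` realized at `ω` (built from the same
weights as `G_N`). -/
def SFPModel.sgraph {α τ : ℝ} {Ω : Type*} [MeasurableSpace Ω] {P : Measure Ω}
    (M : SFPModel α τ P) (N : ℕ) (ω : Ω) : SimpleGraph (Fin N) :=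
  simplifiedGraph α N (fun x => (M N).W x ω)

section AuxSFP

variable {a t : ℝ} {K : ℕ} {Ω : Type*} [MeasurableSpace Ω] {P : Measure Ω}

lemma torusDist_pos {N : ℕ} {x y : Fin N} (h : x ≠ y) : 1 ≤ torusDist N x y := by
  have hxy : x.val ≠ y.val := fun hv => h (Fin.ext hv)
  have hx := x.isLt
  have hy := y.isLt
  simp only [torusDist, Nat.dist]
  omega

lemma torusDist_le (N : ℕ) (x y : Fin N) : torusDist N x y ≤ N :=
  le_trans (min_le_right _ _) (Nat.sub_le _ _)

lemma simplified_connected {α : ℝ} {N : ℕ} (hN : 0 < N) {w : Fin N → ℝ}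
    (h1 : ∀ x, 1 ≤ w x) (hub : ∃ h, (N : ℝ) ^ α * Real.log N ^ 2 ≤ w h) :
    (simplifiedGraph α N w).Connected := by
  obtain ⟨h, hh⟩ := hub
  have key : ∀ x, x ≠ h → (simplifiedGraph α N w).Adj x h := by
    intro x hx
    rw [simplifiedGraph, SimpleGraph.fromRel_adj]
    refine ⟨hx, Or.inl ?_⟩
    have hw0 : (0:ℝ) ≤ w h := le_trans zero_le_one (h1 h)
    calc (N:ℝ)^α * Real.log N ^ 2 ≤ w h := hh
      _ = 1 * w h := (one_mul _).symm
      _ ≤ w x * w h := mul_le_mul_of_nonneg_right (h1 x) hw0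
  rw [SimpleGraph.connected_iff_exists_forall_reachable]
  refine ⟨h, fun y => ?_⟩
  by_cases hy : y = h
  · subst hy; exact SimpleGraph.Reachable.refl _
  · exact (key y hy).symm.reachable

lemma simplified_le_sfp {α : ℝ} (hα : 0 < α) {N : ℕ} {w : Fin N → ℝ}
    {u : Sym2 (Fin N) → ℝ}
    (hu : ∀ e, u e ≤ 1 - Real.exp (-(Real.log N ^ 2))) :
    simplifiedGraph α N w ≤ sfpGraph α N w u := by
  intro x y hxy
  rw [simplifiedGraph, SimpleGraph.fromRel_adj] at hxy
  obtain ⟨hne, hrel⟩ := hxy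
  have hthr : (N:ℝ)^α * Real.log N ^ 2 ≤ w x * w y := by
    rcases hrel with h | h
    · exact h
    · rw [mul_comm (w x) (w y)]; exact h
  rw [sfpGraph, SimpleGraph.fromRel_adj]
  refine ⟨hne, Or.inl ?_⟩
  have hd1 : 1 ≤ torusDist N x y := torusDist_pos hne
  rcases eq_or_lt_of_le hd1 with heq | hlt
  · exact Or.inl heq.symm
  · refine Or.inr ⟨hlt, ?_⟩
    have hdN : (torusDist N x y : ℝ) ≤ (N : ℝ) := by exact_mod_cast torusDist_le N x y
    have hdpos : (0:ℝ) < (torusDist N x y : ℝ) := by exact_mod_cast hd1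
    have hpow : (torusDist N x y : ℝ) ^ α ≤ (N:ℝ) ^ α :=
      Real.rpow_le_rpow hdpos.le hdN hα.le
    have hpowpos : (0:ℝ) < (torusDist N x y : ℝ) ^ α := Real.rpow_pos_of_pos hdpos α
    have h2 : Real.log N ^ 2 * (torusDist N x y : ℝ) ^ α ≤ w x * w y := by
      calc Real.log N ^ 2 * (torusDist N x y : ℝ) ^ α
          ≤ Real.log N ^ 2 * (N:ℝ) ^ α := mul_le_mul_of_nonneg_left hpow (sq_nonneg _)
        _ = (N:ℝ) ^ α * Real.log N ^ 2 := mul_comm _ _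
        _ ≤ w x * w y := hthr
    have h3 : Real.log N ^ 2 ≤ (w x * w y) * ((torusDist N x y : ℝ) ^ α)⁻¹ := by
      rw [← div_eq_mul_inv, le_div_iff₀ hpowpos]
      exact h2
    have hexp : Real.exp (-(w x * w y) * ((torusDist N x y : ℝ) ^ α)⁻¹)
        ≤ Real.exp (-(Real.log N ^ 2)) := by
      apply Real.exp_le_exp.2
      rw [neg_mul]
      exact neg_le_neg h3
    calc u s(x, y) ≤ 1 - Real.exp (-(Real.log N ^ 2)) := hu _
      _ ≤ 1 - Real.exp (-(w x * w y) * ((torusDist N x y : ℝ) ^ α)⁻¹) := by linarith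

lemma sfp_aemeasurable_W (D : SFPData a t K P) (x : Fin K) : AEMeasurable (D.W x) P := by
  by_contra hc
  have h0 := Measure.map_of_not_aemeasurable (f := D.W x) (μ := P) hc
  have h1 := (D.paretoW x).1
  rw [h0] at h1
  have h2 := h1.measure_univ
  simp only [Measure.coe_zero, Pi.zero_apply] at h2
  exact zero_ne_one h2

lemma sfp_aemeasurable_U (D : SFPData a t K P) (e : Sym2 (Fin K)) :
    AEMeasurable (D.U e) P := by
  by_contra hc
  have h0 := Measure.map_of_not_aemeasurable (f := D.U e) (μ := P) hc
  rw [D.uniformU e] at h0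
  have h1 : (volume.restrict (Set.Icc (0:ℝ) 1)) Set.univ = 0 := by rw [h0]; simp
  rw [Measure.restrict_apply_univ, Real.volume_Icc] at h1
  simp at h1

lemma sfp_prob_W_lt [IsProbabilityMeasure P] (D : SFPData a t K P) (x : Fin K)
    {c : ℝ} (hc : 1 ≤ c) :
    P (D.W x ⁻¹' Set.Iio c) = ENNReal.ofReal (1 - c ^ (-(t - 1))) := by
  have hae := sfp_aemeasurable_W D x
  obtain ⟨hprob, htail, _⟩ := D.paretoW x
  have hIci : P.map (D.W x) (Set.Ici c) = ENNReal.ofReal (c ^ (-(t - 1))) := htail c hc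
  have key : P.map (D.W x) (Set.Iio c) = 1 - ENNReal.ofReal (c ^ (-(t - 1))) := by
    haveI := hprob
    rw [← Set.compl_Ici, measure_compl measurableSet_Ici (measure_ne_top _ _), measure_univ,
      hIci]
  rw [← Measure.map_apply_of_aemeasurable hae measurableSet_Iio, key, ← ENNReal.ofReal_one,
    ← ENNReal.ofReal_sub _ (Real.rpow_nonneg (by linarith) _)]

lemma sfp_prob_badA [IsProbabilityMeasure P] (ht : 1 ≤ t) (D : SFPData a t K P)
    {c : ℝ} (hc : 1 ≤ c) :
    P {ω | ∀ x : Fin K, D.W x ω < c}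
      ≤ ENNReal.ofReal (Real.exp (-((K : ℝ) * c ^ (-(t - 1))))) := by
  classical
  set r := c ^ (-(t - 1)) with hr
  have hr0 : 0 ≤ r := Real.rpow_nonneg (by linarith) _
  have hr1 : r ≤ 1 := Real.rpow_le_one_of_one_le_of_nonpos hc (by linarith)
  set sets : (Fin K ⊕ Sym2 (Fin K)) → Set ℝ :=
    Sum.elim (fun _ => Set.Iio c) (fun _ => Set.univ) with hsets
  have hmeas : ∀ i, MeasurableSet (sets i) := by
    intro i
    cases i with
    | inl x => exact measurableSet_Iio
    | inr e => exact MeasurableSet.univ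
  have hset : {ω | ∀ x : Fin K, D.W x ω < c}
      = ⋂ i ∈ (Finset.univ.map ⟨Sum.inl, Sum.inl_injective⟩ :
            Finset (Fin K ⊕ Sym2 (Fin K))),
          (Sum.elim D.W D.U i) ⁻¹' (sets i) := by
    ext ω
    simp [hsets]
  rw [hset, D.indep.measure_inter_preimage_eq_mul _ (fun i _ => hmeas i)]
  rw [Finset.prod_map]
  have hterm : ∀ x : Fin K,
      P (Sum.elim D.W D.U (Sum.inl x) ⁻¹' sets (Sum.inl x)) = ENNReal.ofReal (1 - r) := by
    intro x
    show P (D.W x ⁻¹' Set.Iio c) = _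
    rw [hr]
    exact sfp_prob_W_lt D x hc
  calc (∏ x : Fin K, P (Sum.elim D.W D.U ((⟨Sum.inl, Sum.inl_injective⟩ :
          Fin K ↪ Fin K ⊕ Sym2 (Fin K)) x) ⁻¹' sets ((⟨Sum.inl, Sum.inl_injective⟩ :
          Fin K ↪ Fin K ⊕ Sym2 (Fin K)) x)))
      = ∏ _x : Fin K, ENNReal.ofReal (1 - r) := by
        exact Finset.prod_congr rfl (fun x _ => hterm x)
    _ = (ENNReal.ofReal (1 - r)) ^ K := by
        rw [Finset.prod_const, Finset.card_univ, Fintype.card_fin]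
    _ = ENNReal.ofReal ((1 - r) ^ K) := by
        rw [ENNReal.ofReal_pow (by linarith)]
    _ ≤ ENNReal.ofReal (Real.exp (-((K : ℝ) * r))) := by
        apply ENNReal.ofReal_le_ofReal
        calc (1 - r) ^ K ≤ (Real.exp (-r)) ^ K :=
              pow_le_pow_left₀ (by linarith) (Real.one_sub_le_exp_neg r) K
          _ = Real.exp ((K : ℝ) * (-r)) := (Real.exp_nat_mul _ _).symm
          _ = Real.exp (-((K : ℝ) * r)) := by rw [mul_neg]

lemma sfp_prob_badB [IsProbabilityMeasure P] (D : SFPData a t K P) {ε : ℝ} (hε0 : 0 ≤ ε) :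
    P {ω | ∃ e : Sym2 (Fin K), 1 - ε < D.U e ω}
      ≤ (Fintype.card (Sym2 (Fin K)) : ℝ≥0∞) * ENNReal.ofReal ε := by
  have hsub : {ω | ∃ e : Sym2 (Fin K), 1 - ε < D.U e ω}
      ⊆ ⋃ e : Sym2 (Fin K), D.U e ⁻¹' Set.Ioi (1 - ε) := by
    rintro ω ⟨e, he⟩
    exact Set.mem_iUnion.2 ⟨e, he⟩
  refine le_trans (measure_mono hsub) (le_trans (measure_iUnion_le _) ?_)
  have hterm : ∀ e : Sym2 (Fin K), P (D.U e ⁻¹' Set.Ioi (1 - ε)) ≤ ENNReal.ofReal ε := by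
    intro e
    rw [← Measure.map_apply_of_aemeasurable (sfp_aemeasurable_U D e) measurableSet_Ioi,
      D.uniformU e, Measure.restrict_apply measurableSet_Ioi]
    have hsub2 : Set.Ioi (1 - ε) ∩ Set.Icc (0:ℝ) 1 ⊆ Set.Ioc (1 - ε) 1 :=
      fun z hz => Set.mem_Ioc.2 ⟨hz.1, hz.2.2⟩
    calc volume (Set.Ioi (1 - ε) ∩ Set.Icc (0:ℝ) 1) ≤ volume (Set.Ioc (1 - ε) 1) :=
          measure_mono hsub2
      _ ≤ ENNReal.ofReal ε := by
          rw [Real.volume_Ioc]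
          exact ENNReal.ofReal_le_ofReal (by linarith)
  calc (∑' e : Sym2 (Fin K), P (D.U e ⁻¹' Set.Ioi (1 - ε)))
      ≤ ∑' _e : Sym2 (Fin K), ENNReal.ofReal ε := ENNReal.tsum_le_tsum hterm
    _ = (Fintype.card (Sym2 (Fin K)) : ℝ≥0∞) * ENNReal.ofReal ε := by
        rw [tsum_fintype]
        simp [Finset.sum_const, nsmul_eq_mul]

lemma sfp_prob_badC (D : SFPData a t K P) :
    P {ω | ∃ x : Fin K, D.W x ω < 1} = 0 := by
  refine le_antisymm ?_ zero_le
  have hsub : {ω | ∃ x : Fin K, D.W x ω < 1} ⊆ ⋃ x, D.W x ⁻¹' Set.Iio 1 := by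
    rintro ω ⟨x, hx⟩
    exact Set.mem_iUnion.2 ⟨x, hx⟩
  refine le_trans (measure_mono hsub) (le_trans (measure_iUnion_le _) ?_)
  have hzero : ∀ x : Fin K, P (D.W x ⁻¹' Set.Iio 1) = 0 := by
    intro x
    rw [← Measure.map_apply_of_aemeasurable (sfp_aemeasurable_W D x) measurableSet_Iio]
    exact (D.paretoW x).2.2
  simp [hzero]

end AuxSFP

lemma sfp_card_sym2_le (N : ℕ) : (Fintype.card (Sym2 (Fin N)) : ℝ) ≤ (N:ℝ)^2 := by
  have hsurj : Function.Surjective (fun p : Fin N × Fin N => Sym2.mk p.1 p.2) := by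
    intro z
    induction z using Sym2.ind with
    | _ x y => exact ⟨(x, y), rfl⟩
  have h := Fintype.card_le_of_surjective _ hsurj
  rw [Fintype.card_prod, Fintype.card_fin] at h
  calc (Fintype.card (Sym2 (Fin N)) : ℝ) ≤ ((N * N : ℕ) : ℝ) := by exact_mod_cast h
    _ = (N:ℝ)^2 := by push_cast; ring

lemma sfp_one_le_log {N : ℕ} (hN : 3 ≤ N) : 1 ≤ Real.log N := by
  have h3 : (3:ℝ) ≤ (N:ℝ) := by exact_mod_cast hN
  rw [Real.le_log_iff_exp_le (by linarith)]
  have h := Real.exp_one_lt_d9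
  linarith

lemma sfp_fR_eventually {α τ : ℝ} (hα : 0 < α) (hτ : 1 < τ) (hγ : α * (τ - 1) < 1) :
    ∀ᶠ N : ℕ in atTop,
      Real.exp (-((N:ℝ) * ((N:ℝ)^α * Real.log N ^ 2) ^ (-(τ-1)))) +
        (Fintype.card (Sym2 (Fin N)) : ℝ) * Real.exp (-(Real.log N ^ 2))
      ≤ 2 * (1 / (N:ℝ)^2) := by
  have hs : (0:ℝ) < 1 - α * (τ - 1) := by linarith
  have hlit := isLittleO_log_rpow_rpow_atTop (s := 1 - α * (τ-1)) (1 + 2*(τ-1)) hs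
  have hb := hlit.def (by norm_num : (0:ℝ) < 1/2)
  have hbn : ∀ᶠ N : ℕ in atTop,
      ‖Real.log (N:ℝ) ^ (1 + 2*(τ-1))‖ ≤ 1/2 * ‖(N:ℝ) ^ (1 - α*(τ-1))‖ :=
    (tendsto_natCast_atTop_atTop (R := ℝ)).eventually hb
  have hlog4 : ∀ᶠ N : ℕ in atTop, (4:ℝ) ≤ Real.log N :=
    (Real.tendsto_log_atTop.comp (tendsto_natCast_atTop_atTop (R := ℝ))).eventually_ge_atTop 4
  filter_upwards [hbn, hlog4, eventually_ge_atTop 3] with N hN1 hN2 hN3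
  set L := Real.log (N:ℝ) with hLdef
  have hN0 : (0:ℝ) < (N:ℝ) := by
    have : (3:ℝ) ≤ (N:ℝ) := by exact_mod_cast hN3
    linarith
  have hL0 : (0:ℝ) < L := by linarith
  -- part 2 : card * eps ≤ 1/N²
  have hcard := sfp_card_sym2_le N
  have heps : Real.exp (-(L^2)) ≤ ((N:ℝ)^4)⁻¹ := by
    have h1 : 4 * L ≤ L^2 := by nlinarith
    have h3 : Real.exp (-(4*L)) = ((N:ℝ)^4)⁻¹ := by
      rw [Real.exp_neg]
      congr 1
      rw [show (4:ℝ) * L = ((4:ℕ):ℝ) * L by norm_num, Real.exp_nat_mul, Real.exp_log hN0]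
    calc Real.exp (-(L^2)) ≤ Real.exp (-(4*L)) := Real.exp_le_exp.2 (by linarith)
      _ = ((N:ℝ)^4)⁻¹ := h3
  have hpart2 : (Fintype.card (Sym2 (Fin N)) : ℝ) * Real.exp (-(L^2)) ≤ 1/(N:ℝ)^2 := by
    calc (Fintype.card (Sym2 (Fin N)) : ℝ) * Real.exp (-(L^2))
        ≤ (N:ℝ)^2 * ((N:ℝ)^4)⁻¹ :=
          mul_le_mul hcard heps (Real.exp_pos _).le (by positivity)
      _ = 1/(N:ℝ)^2 := by
          field_simp
  -- part 1
  have hr : ((N:ℝ)^α * L ^ 2) ^ (-(τ-1)) = (N:ℝ)^(-(α*(τ-1))) * L ^ (-(2*(τ-1))) := by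
    rw [Real.mul_rpow (Real.rpow_nonneg hN0.le _) (by positivity)]
    congr 1
    · rw [← Real.rpow_mul hN0.le]
      congr 1
      ring
    · rw [← Real.rpow_natCast L 2, ← Real.rpow_mul hL0.le]
      congr 1
      push_cast
      ring
  have hkey : 2 * L ≤ (N:ℝ) * ((N:ℝ)^α * L ^ 2) ^ (-(τ-1)) := by
    rw [hr]
    have hbig : 2 * L ^ (1 + 2*(τ-1)) ≤ (N:ℝ) ^ (1 - α*(τ-1)) := by
      have h1 : 0 ≤ L ^ (1 + 2*(τ-1)) := Real.rpow_nonneg hL0.le _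
      have h2 : 0 ≤ (N:ℝ) ^ (1 - α*(τ-1)) := Real.rpow_nonneg hN0.le _
      rw [Real.norm_eq_abs, Real.norm_eq_abs, abs_of_nonneg h1, abs_of_nonneg h2] at hN1
      linarith
    have hA : (0:ℝ) < L ^ (2*(τ-1)) := Real.rpow_pos_of_pos hL0 _
    have hsplit : L ^ ((1:ℝ) + 2*(τ-1)) = L * L ^ (2*(τ-1)) := by
      rw [Real.rpow_add hL0, Real.rpow_one]
    have hN1γ : (N:ℝ) * ((N:ℝ)^(-(α*(τ-1))) * L ^ (-(2*(τ-1))))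
        = (N:ℝ)^(1 - α*(τ-1)) * (L ^ (2*(τ-1)))⁻¹ := by
      rw [Real.rpow_neg hL0.le, ← mul_assoc]
      congr 1
      rw [show (1 : ℝ) - α*(τ-1) = 1 + (-(α*(τ-1))) by ring, Real.rpow_add hN0,
        Real.rpow_one]
    rw [hN1γ, ← div_eq_mul_inv, le_div_iff₀ hA]
    calc 2 * L * L ^ (2*(τ-1)) = 2 * (L * L ^ (2*(τ-1))) := by ring
      _ = 2 * L ^ ((1:ℝ) + 2*(τ-1)) := by rw [← hsplit]
      _ ≤ (N:ℝ) ^ (1 - α*(τ-1)) := hbig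
  have hpart1 : Real.exp (-((N:ℝ) * ((N:ℝ)^α * L ^ 2) ^ (-(τ-1)))) ≤ 1/(N:ℝ)^2 := by
    have h3 : Real.exp (-(2*L)) = ((N:ℝ)^2)⁻¹ := by
      rw [Real.exp_neg]
      congr 1
      rw [show (2:ℝ) * L = ((2:ℕ):ℝ) * L by norm_num, Real.exp_nat_mul, Real.exp_log hN0]
    calc Real.exp (-((N:ℝ) * ((N:ℝ)^α * L ^ 2) ^ (-(τ-1))))
        ≤ Real.exp (-(2*L)) := Real.exp_le_exp.2 (by linarith)
      _ = ((N:ℝ)^2)⁻¹ := h3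
      _ = 1/(N:ℝ)^2 := (one_div _).symm
  linarith

lemma sfp_summable {α τ : ℝ} (hα : 0 < α) (hτ : 1 < τ) (hγ : α * (τ - 1) < 1) :
    Summable (fun N : ℕ => if N < 3 then (1:ℝ) else
      Real.exp (-((N:ℝ) * ((N:ℝ)^α * Real.log N ^ 2) ^ (-(τ-1)))) +
      (Fintype.card (Sym2 (Fin N)) : ℝ) * Real.exp (-(Real.log N ^ 2))) := by
  apply summable_of_isBigO_nat (g := fun N : ℕ => 1 / (N:ℝ)^2)
    (summable_one_div_nat_pow.2 one_lt_two)
  rw [Asymptotics.isBigO_iff]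
  refine ⟨2, ?_⟩
  filter_upwards [sfp_fR_eventually hα hτ hγ, eventually_ge_atTop 3] with N h1 h3
  have hN0 : (0:ℝ) < (N:ℝ) := by
    have : (3:ℝ) ≤ (N:ℝ) := by exact_mod_cast h3
    linarith
  rw [if_neg (by omega)]
  have hf0 : 0 ≤ Real.exp (-((N:ℝ) * ((N:ℝ)^α * Real.log N ^ 2) ^ (-(τ-1)))) +
      (Fintype.card (Sym2 (Fin N)) : ℝ) * Real.exp (-(Real.log N ^ 2)) := by positivity
  rw [Real.norm_eq_abs, Real.norm_eq_abs, abs_of_nonneg hf0, abs_of_nonneg (by positivity)]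
  linarith

/-- If `γ = α(τ-1) < 1`, then almost surely, for all `N` large
enough, the simplified graph `\overline{G}_N` is connected and every edge of
`\overline{G}_N` is an edge of `G_N`. -/
theorem sfp_simplified_connected_and_subgraph
    {α τ : ℝ} (hα : 0 < α) (hτ : 1 < τ) (hγ : α * (τ - 1) < 1)
    {Ω : Type*} [MeasurableSpace Ω] (P : Measure Ω) [IsProbabilityMeasure P]
    (M : SFPModel α τ P) :
    ∀ᵐ ω ∂P, ∃ N₀ : ℕ, ∀ N : ℕ, N₀ ≤ N →
      (M.sgraph N ω).Connected ∧ M.sgraph N ω ≤ M.graph N ω := by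
  classical
  set bad : ℕ → Set Ω := fun N =>
    {ω | ∀ x : Fin N, (M N).W x ω < (N:ℝ)^α * Real.log N ^ 2} ∪
    ({ω | ∃ e : Sym2 (Fin N), 1 - Real.exp (-(Real.log N ^ 2)) < (M N).U e ω} ∪
     {ω | ∃ x : Fin N, (M N).W x ω < 1}) with hbad
  set fR : ℕ → ℝ := fun N => if N < 3 then (1:ℝ) else
      Real.exp (-((N:ℝ) * ((N:ℝ)^α * Real.log N ^ 2) ^ (-(τ-1)))) +
      (Fintype.card (Sym2 (Fin N)) : ℝ) * Real.exp (-(Real.log N ^ 2)) with hfR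
  have hfR_nonneg : ∀ N, 0 ≤ fR N := by
    intro N
    rw [hfR]
    dsimp only
    split
    · norm_num
    · positivity
  have hPbad : ∀ N, P (bad N) ≤ ENNReal.ofReal (fR N) := by
    intro N
    by_cases hN3 : N < 3
    · rw [hfR]
      dsimp only
      rw [if_pos hN3, ENNReal.ofReal_one]
      exact prob_le_one
    · push_neg at hN3
      have h3N : (3:ℝ) ≤ (N:ℝ) := by exact_mod_cast hN3
      have hc1 : 1 ≤ (N:ℝ)^α * Real.log N ^ 2 := by
        have hlog := sfp_one_le_log hN3
        have hNα : (1:ℝ) ≤ (N:ℝ)^α := by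
          calc (1:ℝ) = (1:ℝ)^α := (Real.one_rpow α).symm
            _ ≤ (N:ℝ)^α := Real.rpow_le_rpow zero_le_one (by linarith) hα.le
        nlinarith
      have hA := sfp_prob_badA hτ.le (M N) hc1
      have hB := sfp_prob_badB (M N) (ε := Real.exp (-(Real.log N ^ 2))) (Real.exp_pos _).le
      have hC := sfp_prob_badC (M N)
      rw [hfR]
      dsimp only
      rw [if_neg (by omega)]
      calc P (bad N)
          ≤ P {ω | ∀ x : Fin N, (M N).W x ω < (N:ℝ)^α * Real.log N ^ 2}
            + P ({ω | ∃ e : Sym2 (Fin N),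
                  1 - Real.exp (-(Real.log N ^ 2)) < (M N).U e ω} ∪
                {ω | ∃ x : Fin N, (M N).W x ω < 1}) := by
            rw [hbad]
            exact measure_union_le _ _
        _ ≤ ENNReal.ofReal (Real.exp (-((N:ℝ) * ((N:ℝ)^α * Real.log N ^ 2) ^ (-(τ-1)))))
            + ((Fintype.card (Sym2 (Fin N)) : ℝ≥0∞)
                * ENNReal.ofReal (Real.exp (-(Real.log N ^ 2))) + 0) :=
            add_le_add hA (le_trans (measure_union_le _ _) (add_le_add hB (le_of_eq hC)))
        _ = ENNReal.ofReal (Real.exp (-((N:ℝ) * ((N:ℝ)^α * Real.log N ^ 2) ^ (-(τ-1))))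
              + (Fintype.card (Sym2 (Fin N)) : ℝ) * Real.exp (-(Real.log N ^ 2))) := by
            rw [add_zero, ← ENNReal.ofReal_natCast (Fintype.card (Sym2 (Fin N))),
              ← ENNReal.ofReal_mul (Nat.cast_nonneg _),
              ← ENNReal.ofReal_add (Real.exp_pos _).le (by positivity)]
  have hsummable : Summable fR := by
    rw [hfR]
    exact sfp_summable hα hτ hγ
  have hsum : (∑' N, P (bad N)) ≠ ⊤ := by
    have hle : (∑' N, P (bad N)) ≤ ENNReal.ofReal (∑' N, fR N) := by
      rw [ENNReal.ofReal_tsum_of_nonneg hfR_nonneg hsummable]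
      exact ENNReal.tsum_le_tsum hPbad
    exact ne_top_of_le_ne_top ENNReal.ofReal_ne_top hle
  have hBC := MeasureTheory.ae_eventually_notMem (μ := P) hsum
  filter_upwards [hBC] with ω hω
  rw [eventually_atTop] at hω
  obtain ⟨N₁, hN₁⟩ := hω
  refine ⟨max N₁ 3, fun N hN => ?_⟩
  have h3 : 3 ≤ N := le_trans (le_max_right _ _) hN
  have hNb := hN₁ N (le_trans (le_max_left _ _) hN)
  rw [hbad] at hNb
  simp only [Set.mem_union, Set.mem_setOf_eq, not_or, not_exists, not_forall, not_lt] at hNb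
  obtain ⟨hAω, hBω, hCω⟩ := hNb
  obtain ⟨xh, hxh⟩ := hAω
  constructor
  · exact simplified_connected (by omega) hCω ⟨xh, hxh⟩
  · exact simplified_le_sfp hα hBω

end
end

section
/- Let W_x and W_y be independent random variables with Pareto law P(W ≥ t) = t^{−(τ−1)} for t ≥ 1 (τ > 1), let α > 0, γ := α(τ−1), and let d be an integer with d > 1. Then E[ 1 − exp(−W_x W_y d^{−α}) ] ≤ c · d^{−α} if τ > 2, and E[ 1 − exp(−W_x W_y d^{−α}) ] ≤ c · d^{−γ} (log d)² if τ ≤ 2, where c > 0 is a constant depending only on α and τ. -/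
open MeasureTheory ProbabilityTheory Real Set
open scoped ENNReal

noncomputable section

lemma one_sub_exp_neg_le_rpow {z β : ℝ} (hz : 0 ≤ z) (hβ0 : 0 < β) (hβ1 : β ≤ 1) :
    1 - Real.exp (-z) ≤ z ^ β := by
  rcases eq_or_lt_of_le hz with h | h
  · simp [← h, Real.zero_rpow hβ0.ne']
  rcases le_or_gt z 1 with h1 | h1
  · have h2 : 1 - Real.exp (-z) ≤ z := by
      have := Real.add_one_le_exp (-z); linarith
    refine h2.trans ?_
    calc z = z ^ (1 : ℝ) := (Real.rpow_one z).symm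
    _ ≤ z ^ β := Real.rpow_le_rpow_of_exponent_ge h h1 hβ1
  · have h2 : (1 : ℝ) ≤ z ^ β := Real.one_le_rpow h1.le hβ0.le
    have := Real.exp_pos (-z)
    linarith

lemma pareto_ae_one_le {τ : ℝ} {μ : Measure ℝ} (h : IsParetoLaw τ μ) :
    ∀ᵐ w ∂μ, 1 ≤ w := by
  rw [ae_iff]
  convert h.2.2 using 2
  ext w
  simp [not_le]

lemma pareto_rpow_moment {τ β : ℝ} (hτ : 1 < τ) (hβ0 : 0 < β) (hβ : β < τ - 1)
    {μ : Measure ℝ} (h : IsParetoLaw τ μ) :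
    Integrable (fun w => w ^ β) μ ∧ ∫ w, w ^ β ∂μ ≤ (τ - 1) / (τ - 1 - β) := by
  have hprob : IsProbabilityMeasure μ := h.1
  have hae : ∀ᵐ w ∂μ, 1 ≤ w := pareto_ae_one_le h
  have hnn : 0 ≤ᵐ[μ] fun w : ℝ => w ^ β :=
    hae.mono fun w hw => Real.rpow_nonneg (by linarith) β
  have hm : Measurable fun w : ℝ => w ^ β := by fun_prop
  set r : ℝ := (τ - 1) / β with hr
  have hr1 : 1 < r := (one_lt_div hβ0).mpr (by linarith)
  -- measure of superlevel sets
  have hkey1 : ∀ t : ℝ, 0 < t → t ≤ 1 → μ {w : ℝ | t ≤ w ^ β} = 1 := by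
    intro t ht ht1
    have : {w : ℝ | t ≤ w ^ β} =ᵐ[μ] (univ : Set ℝ) := by
      rw [Filter.eventuallyEq_set]
      filter_upwards [hae] with w hw
      simp only [mem_setOf_eq, mem_univ, iff_true]
      have : (1 : ℝ) ≤ w ^ β := Real.one_le_rpow hw hβ0.le
      linarith
    rw [measure_congr this, measure_univ]
  have hkey2 : ∀ t : ℝ, 1 < t →
      μ {w : ℝ | t ≤ w ^ β} = ENNReal.ofReal (t ^ (-r)) := by
    intro t ht
    have ht0 : (0 : ℝ) ≤ t := by linarith
    have h1t : (1 : ℝ) ≤ t ^ β⁻¹ := Real.one_le_rpow ht.le (by positivity)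
    have : {w : ℝ | t ≤ w ^ β} =ᵐ[μ] {w : ℝ | t ^ β⁻¹ ≤ w} := by
      rw [Filter.eventuallyEq_set]
      filter_upwards [hae] with w hw
      exact (Real.rpow_inv_le_iff_of_pos ht0 (by linarith) hβ0).symm
    rw [measure_congr this, h.2.1 _ h1t, ← Real.rpow_mul ht0]
    congr 1
    rw [hr]
    field_simp
  have hlayer := lintegral_eq_lintegral_meas_le μ hnn hm.aemeasurable
  have hsplit : Ioc (0:ℝ) 1 ∪ Ioi (1:ℝ) = Ioi (0:ℝ) := Ioc_union_Ioi_eq_Ioi zero_le_one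
  have hpiece1 : ∫⁻ t in Ioc (0:ℝ) 1, μ {w : ℝ | t ≤ w ^ β} = 1 := by
    rw [setLIntegral_congr_fun measurableSet_Ioc
      (fun (t : ℝ) ht => hkey1 t ht.1 ht.2)]
    simp
  have hint : IntegrableOn (fun t : ℝ => t ^ (-r)) (Ioi (1:ℝ)) :=
    integrableOn_Ioi_rpow_of_lt (by linarith) one_pos
  have hrne : r - 1 ≠ 0 := by linarith
  have hval : ∫ t in Ioi (1:ℝ), t ^ (-r) = 1 / (r - 1) := by
    rw [integral_Ioi_rpow_of_lt (by linarith) one_pos, Real.one_rpow,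
      show -r + 1 = -(r-1) from by ring, neg_div_neg_eq]
  have hpiece2 : ∫⁻ t in Ioi (1:ℝ), μ {w : ℝ | t ≤ w ^ β} = ENNReal.ofReal (1/(r-1)) := by
    rw [setLIntegral_congr_fun measurableSet_Ioi
      (fun (t : ℝ) ht => hkey2 t ht)]
    rw [← ofReal_integral_eq_lintegral_ofReal hint
      ((ae_restrict_iff' measurableSet_Ioi).mpr (ae_of_all _ fun t ht =>
        Real.rpow_nonneg (le_of_lt (lt_trans one_pos ht)) _)), hval]
  have htot : ∫⁻ w, ENNReal.ofReal (w ^ β) ∂μ = 1 + ENNReal.ofReal (1/(r-1)) := by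
    rw [hlayer, ← hsplit, lintegral_union measurableSet_Ioi Ioc_disjoint_Ioi_same,
      hpiece1, hpiece2]
  have hfin : ∫⁻ w, ENNReal.ofReal (w ^ β) ∂μ ≠ ∞ := by
    rw [htot]
    exact ENNReal.add_ne_top.mpr ⟨ENNReal.one_ne_top, ENNReal.ofReal_ne_top⟩
  have hint2 : Integrable (fun w : ℝ => w ^ β) μ := by
    refine ⟨hm.aestronglyMeasurable, ?_⟩
    rw [hasFiniteIntegral_iff_ofReal hnn]
    exact lt_of_le_of_ne le_top hfin
  refine ⟨hint2, ?_⟩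
  rw [integral_eq_lintegral_of_nonneg_ae hnn hm.aestronglyMeasurable, htot]
  have hr0 : (0:ℝ) ≤ 1/(r-1) := by
    have : (0:ℝ) < r - 1 := by linarith
    positivity
  rw [ENNReal.toReal_add ENNReal.one_ne_top ENNReal.ofReal_ne_top, ENNReal.toReal_one,
    ENNReal.toReal_ofReal hr0]
  have hβne : β ≠ 0 := hβ0.ne'
  have hτβ : τ - 1 - β ≠ 0 := by linarith
  have heq : 1 + 1/(r-1) = (τ-1)/(τ-1-β) := by
    rw [hr]
    field_simp
    ring
  linarith

lemma aemeasurable_of_pareto_map {Ω : Type} [MeasurableSpace Ω] {P : Measure Ω}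
    {τ : ℝ} {X : Ω → ℝ} (hX : IsParetoLaw τ (P.map X)) : AEMeasurable X P := by
  by_contra hc
  rw [Measure.map_of_not_aemeasurable hc] at hX
  have := hX.1.measure_univ
  simp at this

lemma main_bound {Ω : Type} [MeasurableSpace Ω] (P : Measure Ω) [IsProbabilityMeasure P]
    {τ β a : ℝ} (hτ : 1 < τ) (hβ0 : 0 < β) (hβ1 : β ≤ 1) (hβ : β < τ - 1) (ha : 0 < a)
    {X Y : Ω → ℝ} (hXY : IndepFun X Y P)
    (hX : IsParetoLaw τ (P.map X)) (hY : IsParetoLaw τ (P.map Y)) :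
    (∫ ω, (1 - Real.exp (-(X ω * Y ω) * a)) ∂P) ≤ a ^ β * ((τ - 1) / (τ - 1 - β)) ^ 2 := by
  set M : ℝ := (τ - 1) / (τ - 1 - β) with hM
  have hM0 : 0 ≤ M := by
    rw [hM]
    have h1 : (0:ℝ) < τ - 1 := by linarith
    have h2 : (0:ℝ) < τ - 1 - β := by linarith
    positivity
  have aemX : AEMeasurable X P := aemeasurable_of_pareto_map hX
  have aemY : AEMeasurable Y P := aemeasurable_of_pareto_map hY
  have hX1 : ∀ᵐ ω ∂P, 1 ≤ X ω := ae_of_ae_map aemX (pareto_ae_one_le hX)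
  have hY1 : ∀ᵐ ω ∂P, 1 ≤ Y ω := ae_of_ae_map aemY (pareto_ae_one_le hY)
  have hm : Measurable fun w : ℝ => w ^ β := by fun_prop
  obtain ⟨intX', EX'⟩ := pareto_rpow_moment hτ hβ0 hβ hX
  obtain ⟨intY', EY'⟩ := pareto_rpow_moment hτ hβ0 hβ hY
  have intXβ : Integrable (fun ω => X ω ^ β) P :=
    (integrable_map_measure hm.aestronglyMeasurable aemX).mp intX'
  have intYβ : Integrable (fun ω => Y ω ^ β) P :=
    (integrable_map_measure hm.aestronglyMeasurable aemY).mp intY'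
  have EXle : ∫ ω, X ω ^ β ∂P ≤ M := by
    rw [← integral_map aemX hm.aestronglyMeasurable]; exact EX'
  have EYle : ∫ ω, Y ω ^ β ∂P ≤ M := by
    rw [← integral_map aemY hm.aestronglyMeasurable]; exact EY'
  have EXnn : 0 ≤ ∫ ω, X ω ^ β ∂P :=
    integral_nonneg_of_ae (hX1.mono fun ω hω => Real.rpow_nonneg (by linarith) β)
  have EYnn : 0 ≤ ∫ ω, Y ω ^ β ∂P :=
    integral_nonneg_of_ae (hY1.mono fun ω hω => Real.rpow_nonneg (by linarith) β)
  have indepβ : IndepFun (fun ω => X ω ^ β) (fun ω => Y ω ^ β) P := hXY.comp hm hm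
  have intmul : Integrable (fun ω => X ω ^ β * Y ω ^ β) P :=
    indepβ.integrable_mul intXβ intYβ
  have Emul : ∫ ω, X ω ^ β * Y ω ^ β ∂P
      = (∫ ω, X ω ^ β ∂P) * ∫ ω, Y ω ^ β ∂P :=
    indepβ.integral_fun_mul_eq_mul_integral intXβ.1 intYβ.1
  have asm : AEStronglyMeasurable (fun ω => 1 - Real.exp (-(X ω * Y ω) * a)) P := by
    have h1 : AEMeasurable (fun ω => Real.exp (-(X ω * Y ω) * a)) P :=
      Real.measurable_exp.comp_aemeasurable (((aemX.mul aemY).neg).mul_const a)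
    exact (aemeasurable_const.sub h1).aestronglyMeasurable
  have intLHS : Integrable (fun ω => 1 - Real.exp (-(X ω * Y ω) * a)) P := by
    refine Integrable.mono' (integrable_const (1:ℝ)) asm ?_
    filter_upwards [hX1, hY1] with ω hx hy
    have hz : 0 ≤ X ω * Y ω * a :=
      mul_nonneg (mul_nonneg (by linarith) (by linarith)) ha.le
    have he1 : Real.exp (-(X ω * Y ω) * a) ≤ 1 := by
      rw [Real.exp_le_one_iff]; nlinarith
    have he0 : 0 < Real.exp (-(X ω * Y ω) * a) := Real.exp_pos _
    rw [Real.norm_eq_abs, abs_le]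
    constructor <;> linarith
  have ptwise : ∀ᵐ ω ∂P,
      1 - Real.exp (-(X ω * Y ω) * a) ≤ a ^ β * (X ω ^ β * Y ω ^ β) := by
    filter_upwards [hX1, hY1] with ω hx hy
    have hx0 : (0:ℝ) ≤ X ω := by linarith
    have hy0 : (0:ℝ) ≤ Y ω := by linarith
    have hz : 0 ≤ X ω * Y ω * a := by positivity
    have key : 1 - Real.exp (-(X ω * Y ω * a)) ≤ (X ω * Y ω * a) ^ β :=
      one_sub_exp_neg_le_rpow hz hβ0 hβ1
    have hexp : (X ω * Y ω * a) ^ β = a ^ β * (X ω ^ β * Y ω ^ β) := by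
      rw [Real.mul_rpow (by positivity) ha.le, Real.mul_rpow hx0 hy0]
      ring
    rw [neg_mul]
    rw [hexp] at key
    exact key
  calc ∫ ω, (1 - Real.exp (-(X ω * Y ω) * a)) ∂P
      ≤ ∫ ω, a ^ β * (X ω ^ β * Y ω ^ β) ∂P :=
        integral_mono_ae intLHS (intmul.const_mul _) ptwise
    _ = a ^ β * ((∫ ω, X ω ^ β ∂P) * ∫ ω, Y ω ^ β ∂P) := by
        rw [integral_const_mul, Emul]
    _ ≤ a ^ β * (M * M) := by
        have : (∫ ω, X ω ^ β ∂P) * ∫ ω, Y ω ^ β ∂P ≤ M * M :=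
          mul_le_mul EXle EYle EYnn hM0
        exact mul_le_mul_of_nonneg_left this (Real.rpow_nonneg ha.le β)
    _ = a ^ β * M ^ 2 := by ring

/-- Let `W_x, W_y` be independent Pareto(τ-1) random variables,
`α > 0`, `γ = α(τ-1)`, and `d > 1` an integer. Then
`E[1 - exp(-W_x W_y d^{-α})] ≤ c d^{-α}` if `τ > 2` and
`E[1 - exp(-W_x W_y d^{-α})] ≤ c d^{-γ} (log d)²` if `τ ≤ 2`, where `c > 0` depends
only on `α` and `τ`. -/
theorem sfp_link_probability_bound (α τ : ℝ) (hα : 0 < α) (hτ : 1 < τ) :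
    ∃ c : ℝ, 0 < c ∧
      ∀ (Ω : Type) (_ : MeasurableSpace Ω) (P : Measure Ω),
        IsProbabilityMeasure P →
        ∀ X Y : Ω → ℝ, IndepFun X Y P →
          IsParetoLaw τ (P.map X) → IsParetoLaw τ (P.map Y) →
          ∀ d : ℕ, 1 < d →
            (2 < τ →
              (∫ ω, (1 - Real.exp (-(X ω * Y ω) * ((d : ℝ) ^ α)⁻¹)) ∂P) ≤
                c * (d : ℝ) ^ (-α)) ∧
            (τ ≤ 2 →
              (∫ ω, (1 - Real.exp (-(X ω * Y ω) * ((d : ℝ) ^ α)⁻¹)) ∂P) ≤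
                c * (d : ℝ) ^ (-(α * (τ - 1))) * Real.log d ^ 2) := by
  set c : ℝ := ((τ-1)/(τ-2))^2
      + Real.exp α * ((τ-1)^2 + 4*((Real.log 2)⁻¹)^2 + 1) with hc
  have hlog2 : 0 < Real.log 2 := Real.log_pos one_lt_two
  have hcpos : 0 < c := by
    rw [hc]
    positivity
  refine ⟨c, hcpos, ?_⟩
  intro Ω mΩ P hP X Y hXY hX hY d hd
  haveI := hP
  have hd1 : (1:ℝ) < (d:ℝ) := by exact_mod_cast hd
  have hd2 : (2:ℝ) ≤ (d:ℝ) := by exact_mod_cast hd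
  have hdpos : (0:ℝ) < (d:ℝ) := by linarith
  have hlogd : 0 < Real.log d := Real.log_pos hd1
  have hlog2d : Real.log 2 ≤ Real.log d := Real.log_le_log (by norm_num) hd2
  have ha : 0 < ((d : ℝ) ^ α)⁻¹ := by positivity
  have hda : ((d : ℝ) ^ α)⁻¹ = (d : ℝ) ^ (-α) := (Real.rpow_neg hdpos.le α).symm
  have hγnn : (0:ℝ) ≤ (d : ℝ) ^ (-(α * (τ - 1))) := Real.rpow_nonneg hdpos.le _
  constructor
  · -- case τ > 2
    intro h2
    have key := main_bound (β := 1) P hτ one_pos le_rfl (by linarith) ha hXY hX hY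
    rw [Real.rpow_one, show τ - 1 - 1 = τ - 2 from by ring] at key
    have hM2c : ((τ-1)/(τ-2))^2 ≤ c := by
      rw [hc]
      have : (0:ℝ) < Real.exp α * ((τ-1)^2 + 4*((Real.log 2)⁻¹)^2 + 1) := by positivity
      linarith
    calc ∫ ω, (1 - Real.exp (-(X ω * Y ω) * ((d : ℝ) ^ α)⁻¹)) ∂P
        ≤ ((d : ℝ) ^ α)⁻¹ * ((τ-1)/(τ-2))^2 := key
      _ = (d : ℝ) ^ (-α) * ((τ-1)/(τ-2))^2 := by rw [hda]
      _ ≤ (d : ℝ) ^ (-α) * c := by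
          exact mul_le_mul_of_nonneg_left hM2c (Real.rpow_nonneg hdpos.le _)
      _ = c * (d : ℝ) ^ (-α) := mul_comm _ _
  · -- case τ ≤ 2
    intro hτ2
    by_cases hsmall : (τ - 1) * Real.log d ≤ 1
    · -- small d : integral ≤ 4 and RHS ≥ 4
      have hβ0 : (0:ℝ) < (τ-1)/2 := by linarith
      have key := main_bound (β := (τ-1)/2) P hτ hβ0 (by linarith) (by linarith) ha hXY hX hY
      have hτ1 : τ - 1 ≠ 0 := by intro h; linarith [hτ]
      have h4 : ((τ-1)/(τ - 1 - (τ-1)/2))^2 = 4 := by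
        rw [show τ - 1 - (τ-1)/2 = (τ-1)/2 from by ring]
        rw [show (τ-1)/((τ-1)/2) = 2 from by field_simp]
        norm_num
      rw [h4] at key
      have haβ : (((d : ℝ) ^ α)⁻¹) ^ ((τ-1)/2) ≤ 1 := by
        apply Real.rpow_le_one ha.le _ hβ0.le
        rw [inv_le_one_iff₀]
        right
        calc (1:ℝ) = 1 ^ α := (Real.one_rpow α).symm
          _ ≤ (d:ℝ) ^ α := Real.rpow_le_rpow zero_le_one hd1.le hα.le
      have hint4 : ∫ ω, (1 - Real.exp (-(X ω * Y ω) * ((d : ℝ) ^ α)⁻¹)) ∂P ≤ 4 := by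
        calc ∫ ω, (1 - Real.exp (-(X ω * Y ω) * ((d : ℝ) ^ α)⁻¹)) ∂P
            ≤ (((d : ℝ) ^ α)⁻¹) ^ ((τ-1)/2) * 4 := key
          _ ≤ 1 * 4 := mul_le_mul_of_nonneg_right haβ (by norm_num)
          _ = 4 := by norm_num
      refine hint4.trans ?_
      -- show 4 ≤ c * d^{-γ} * (log d)^2
      have hgd : Real.exp (-α) ≤ (d : ℝ) ^ (-(α * (τ - 1))) := by
        rw [Real.rpow_def_of_pos hdpos]
        apply Real.exp_le_exp.mpr
        have h1 : α * ((τ-1) * Real.log d) ≤ α * 1 :=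
          mul_le_mul_of_nonneg_left hsmall hα.le
        have h2 : Real.log d * -(α*(τ-1)) = -(α*((τ-1)*Real.log d)) := by ring
        rw [h2]
        linarith
      have hAc : Real.exp α * (4*((Real.log 2)⁻¹)^2) ≤ c := by
        rw [hc]
        have h1 : Real.exp α * (4*((Real.log 2)⁻¹)^2)
            ≤ Real.exp α * ((τ-1)^2 + 4*((Real.log 2)⁻¹)^2 + 1) := by
          apply mul_le_mul_of_nonneg_left _ (Real.exp_pos α).le
          have := sq_nonneg (τ-1)
          linarith
        have := sq_nonneg ((τ-1)/(τ-2))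
        linarith
      have hid : Real.exp α * (4*((Real.log 2)⁻¹)^2)
          * (Real.exp (-α) * (Real.log 2)^2) = 4 := by
        rw [Real.exp_neg]
        field_simp
      have hB : Real.exp (-α) * (Real.log 2)^2
          ≤ (d : ℝ) ^ (-(α * (τ - 1))) * (Real.log d)^2 := by
        apply mul_le_mul hgd (pow_le_pow_left₀ hlog2.le hlog2d 2) (sq_nonneg _) hγnn
      calc (4:ℝ) = Real.exp α * (4*((Real.log 2)⁻¹)^2)
            * (Real.exp (-α) * (Real.log 2)^2) := hid.symm
        _ ≤ c * ((d : ℝ) ^ (-(α * (τ - 1))) * (Real.log d)^2) := by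
            apply mul_le_mul hAc hB (by positivity) hcpos.le
        _ = c * (d : ℝ) ^ (-(α * (τ - 1))) * (Real.log d)^2 := by ring
    · -- large d
      push_neg at hsmall
      have hinvpos : 0 < (Real.log d)⁻¹ := by positivity
      have hinvlt : (Real.log d)⁻¹ < τ - 1 := by
        rw [← one_div, div_lt_iff₀ hlogd]
        linarith
      set β : ℝ := τ - 1 - (Real.log d)⁻¹ with hβ
      have hβ0 : 0 < β := by rw [hβ]; linarith
      have hβ1 : β ≤ 1 := by rw [hβ]; linarith
      have hβlt : β < τ - 1 := by rw [hβ]; linarith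
      have key := main_bound (β := β) P hτ hβ0 hβ1 hβlt ha hXY hX hY
      have hsub : τ - 1 - β = (Real.log d)⁻¹ := by rw [hβ]; ring
      have hMval : (τ-1)/(τ-1-β) = (τ-1) * Real.log d := by
        rw [hsub, div_eq_mul_inv, inv_inv]
      have haβ : (((d : ℝ) ^ α)⁻¹) ^ β
          = (d : ℝ) ^ (-(α * (τ - 1))) * Real.exp α := by
        rw [hda, ← Real.rpow_mul hdpos.le]
        rw [show -α * β = -(α * (τ - 1)) + α * (Real.log d)⁻¹ from by rw [hβ]; ring]
        rw [Real.rpow_add hdpos]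
        congr 1
        rw [Real.rpow_def_of_pos hdpos]
        congr 1
        field_simp
      rw [hMval, haβ] at key
      have hc2 : Real.exp α * (τ-1)^2 ≤ c := by
        rw [hc]
        have h1 : Real.exp α * (τ-1)^2
            ≤ Real.exp α * ((τ-1)^2 + 4*((Real.log 2)⁻¹)^2 + 1) := by
          apply mul_le_mul_of_nonneg_left _ (Real.exp_pos α).le
          have := sq_nonneg ((Real.log 2)⁻¹)
          linarith
        have := sq_nonneg ((τ-1)/(τ-2))
        linarith
      calc ∫ ω, (1 - Real.exp (-(X ω * Y ω) * ((d : ℝ) ^ α)⁻¹)) ∂P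
          ≤ (d : ℝ) ^ (-(α * (τ - 1))) * Real.exp α * ((τ-1) * Real.log d)^2 := key
        _ = Real.exp α * (τ-1)^2 * ((d : ℝ) ^ (-(α * (τ - 1))) * (Real.log d)^2) := by
            ring
        _ ≤ c * ((d : ℝ) ^ (-(α * (τ - 1))) * (Real.log d)^2) := by
            apply mul_le_mul_of_nonneg_right hc2 (by positivity)
        _ = c * (d : ℝ) ^ (-(α * (τ - 1))) * Real.log d ^ 2 := by ring

end
end

section
/- Let (X_N)_{N∈ℕ} be a sequence of random variables (possibly on different probability spaces) such that for every ε > 0, P(X_N > N^{ε}) → 0 as N → ∞. Then there exists a slowly varying function ℓ : ℕ → (0,∞) such that P(X_N > ℓ(N)) → 0 as N → ∞. -/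
open MeasureTheory Filter

noncomputable section

open scoped ENNReal

namespace SVAux

def Kfun (M : ℕ → ℕ) (m : ℕ) : ℕ :=
  Nat.findGreatest (fun j => ∀ i < j, M i ≤ 2 ^ m) m

lemma Kfun_le (M : ℕ → ℕ) (m : ℕ) : Kfun M m ≤ m := Nat.findGreatest_le m

lemma Kfun_spec (M : ℕ → ℕ) (m : ℕ) : ∀ i < Kfun M m, M i ≤ 2 ^ m :=
  Nat.findGreatest_spec (P := fun j => ∀ i < j, M i ≤ 2 ^ m) (Nat.zero_le m)
    (fun i hi => absurd hi (Nat.not_lt_zero i))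

lemma Kfun_mono (M : ℕ → ℕ) : Monotone (Kfun M) := by
  intro a b hab
  exact Nat.le_findGreatest ((Kfun_le M a).trans hab)
    (fun i hi => (Kfun_spec M a i hi).trans (Nat.pow_le_pow_right (by norm_num) hab))

lemma Kfun_tendsto (M : ℕ → ℕ) : Tendsto (Kfun M) atTop atTop := by
  rw [Filter.tendsto_atTop_atTop]
  intro b
  refine ⟨max b ((Finset.range b).sup M), fun m hm => ?_⟩
  refine Nat.le_findGreatest (le_trans (le_max_left _ _) hm) (fun i hi => ?_)
  calc M i ≤ (Finset.range b).sup M := Finset.le_sup (Finset.mem_range.2 hi)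
    _ ≤ m := le_trans (le_max_right _ _) hm
    _ ≤ 2 ^ m := (Nat.lt_two_pow_self (n := m)).le

def gfun (M : ℕ → ℕ) (m : ℕ) : ℝ := ((m : ℝ) + 1) * Real.log 2 / (Kfun M m : ℝ)

def Dfun (M : ℕ → ℕ) : ℕ → ℝ
  | 0 => max 1 (gfun M 0)
  | m + 1 => max (Dfun M m) (gfun M (m + 1))

lemma gfun_le_Dfun (M : ℕ → ℕ) (m : ℕ) : gfun M m ≤ Dfun M m := by
  cases m with
  | zero => exact le_max_right _ _
  | succ m => exact le_max_right _ _

lemma Dfun_mono (M : ℕ → ℕ) : Monotone (Dfun M) :=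
  monotone_nat_of_le_succ (fun m => le_max_left _ _)

lemma Dfun_succ_sub_le (M : ℕ → ℕ) (m : ℕ) (hK : 1 ≤ Kfun M m) :
    Dfun M (m + 1) - Dfun M m ≤ Real.log 2 / (Kfun M (m + 1) : ℝ) := by
  have hK1 : (1 : ℝ) ≤ (Kfun M m : ℝ) := by exact_mod_cast hK
  have hKm : (0 : ℝ) < (Kfun M m : ℝ) := lt_of_lt_of_le zero_lt_one hK1
  have hmono : (Kfun M m : ℝ) ≤ (Kfun M (m + 1) : ℝ) := by
    exact_mod_cast Kfun_mono M (Nat.le_succ m)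
  have hK1' : (0 : ℝ) < (Kfun M (m + 1) : ℝ) := lt_of_lt_of_le hKm hmono
  have hlog : (0 : ℝ) ≤ Real.log 2 := Real.log_nonneg one_le_two
  have hstep : gfun M (m + 1) ≤ gfun M m + Real.log 2 / (Kfun M (m + 1) : ℝ) := by
    have h1 : ((m : ℝ) + 1) * Real.log 2 / (Kfun M (m + 1) : ℝ)
        ≤ ((m : ℝ) + 1) * Real.log 2 / (Kfun M m : ℝ) :=
      div_le_div_of_nonneg_left (by positivity) hKm hmono
    have h2 : gfun M (m + 1)
        = ((m : ℝ) + 1) * Real.log 2 / (Kfun M (m + 1) : ℝ)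
          + Real.log 2 / (Kfun M (m + 1) : ℝ) := by
      unfold gfun
      push_cast
      field_simp
    rw [h2]
    unfold gfun
    linarith
  have hD : Dfun M (m + 1) ≤ Dfun M m + Real.log 2 / (Kfun M (m + 1) : ℝ) := by
    have hg := gfun_le_Dfun M m
    have hpos : (0 : ℝ) ≤ Real.log 2 / (Kfun M (m + 1) : ℝ) := by positivity
    show max (Dfun M m) (gfun M (m + 1)) ≤ _
    exact max_le (by linarith) (by linarith)
  linarith
end SVAux

namespace SVAux

lemma Dfun_window (M : ℕ → ℕ) (δ : ℝ) (a : ℕ)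
    (hδ : ∀ i, a ≤ i → Dfun M (i + 1) - Dfun M i ≤ δ) :
    ∀ t : ℕ, Dfun M (a + t) - Dfun M a ≤ (t : ℝ) * δ := by
  intro t
  induction t with
  | zero => simp
  | succ t ih =>
    have h1 : Dfun M (a + t + 1) - Dfun M (a + t) ≤ δ := hδ (a + t) (Nat.le_add_right a t)
    have h2 : a + (t + 1) = (a + t) + 1 := by omega
    rw [h2]
    push_cast
    linarith

end SVAux

open SVAux

/-- `ℓ : ℕ → (0, ∞)` is slowly varying: for every `s > 0`, `ℓ(⌊s n⌋)/ℓ(n) → 1`. -/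
def SlowlyVarying (ℓ : ℕ → ℝ) : Prop :=
  ∀ s : ℝ, 0 < s →
    Filter.Tendsto (fun n : ℕ => ℓ ⌊s * (n : ℝ)⌋₊ / ℓ n) Filter.atTop (nhds 1)

/-- If `(X_N)` is a sequence of random variables (possibly on
different probability spaces) with `P(X_N > N^ε) → 0` for every `ε > 0`, then there
is a slowly varying `ℓ : ℕ → (0,∞)` with `P(X_N > ℓ(N)) → 0`. -/
theorem exists_slowly_varying_dominating
    (Ω : ℕ → Type) (mΩ : ∀ N, MeasurableSpace (Ω N)) (P : ∀ N, Measure (Ω N))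
    (hP : ∀ N, IsProbabilityMeasure (P N)) (X : ∀ N, Ω N → ℝ)
    (h : ∀ ε : ℝ, 0 < ε →
      Filter.Tendsto (fun N : ℕ => P N {ω | (N : ℝ) ^ ε < X N ω})
        Filter.atTop (nhds 0)) :
    ∃ ℓ : ℕ → ℝ, (∀ n, 0 < ℓ n) ∧ SlowlyVarying ℓ ∧
      Filter.Tendsto (fun N : ℕ => P N {ω | ℓ N < X N ω})
        Filter.atTop (nhds 0) := by
  -- extract thresholds
  have hM0 : ∀ j : ℕ, ∃ Mj : ℕ, ∀ N, Mj ≤ N →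
      P N {ω | (N : ℝ) ^ (((j : ℝ) + 1)⁻¹) < X N ω} ≤ ((j : ℝ≥0∞) + 1)⁻¹ := by
    intro j
    have hpos : (0 : ℝ) < ((j : ℝ) + 1)⁻¹ := by positivity
    have hε : (0 : ℝ≥0∞) < ((j : ℝ≥0∞) + 1)⁻¹ := by
      rw [ENNReal.inv_pos]
      exact ENNReal.add_ne_top.2 ⟨ENNReal.natCast_ne_top j, ENNReal.one_ne_top⟩
    obtain ⟨N0, hN0⟩ := (ENNReal.tendsto_atTop_zero.1 (h _ hpos)) _ hε
    exact ⟨N0, fun N hN => hN0 N hN⟩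
  choose M hM using hM0
  refine ⟨fun N => Real.exp (Dfun M (Nat.log 2 N)), fun n => Real.exp_pos _, ?_, ?_⟩
  · -- slowly varying
    intro s hs
    have key : Tendsto (fun n : ℕ =>
        Dfun M (Nat.log 2 ⌊s * (n : ℝ)⌋₊) - Dfun M (Nat.log 2 n)) atTop (nhds 0) := by
      rw [NormedAddCommGroup.tendsto_nhds_zero]
      intro ε hε
      set c : ℕ := ⌈s + 2 / s⌉₊ with hcdef
      have hcR : s + 2 / s ≤ (c : ℝ) := Nat.le_ceil _
      have hc2 : (c : ℝ) ≤ 2 ^ c := by exact_mod_cast (Nat.lt_two_pow_self (n := c)).le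
      have hs2 : (0 : ℝ) < 2 / s := by positivity
      have hsc : s ≤ (2 : ℝ) ^ c := by linarith
      have hsc2 : 2 / s ≤ (2 : ℝ) ^ c := by linarith
      set δ : ℝ := ε / (2 * c + 2) with hδdef
      have hδpos : 0 < δ := by positivity
      obtain ⟨m₀, hm₀⟩ := (Filter.tendsto_atTop_atTop.1 (Kfun_tendsto M))
        (max 1 ⌈Real.log 2 / δ⌉₊)
      have hinc : ∀ i, m₀ ≤ i → Dfun M (i + 1) - Dfun M i ≤ δ := by
        intro i hi
        have hK1 : 1 ≤ Kfun M i := le_trans (le_max_left _ _) (hm₀ i hi)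
        have hKceil : (⌈Real.log 2 / δ⌉₊ : ℝ) ≤ (Kfun M (i + 1) : ℝ) := by
          exact_mod_cast le_trans (le_max_right _ _)
            (le_trans (hm₀ i hi) (Kfun_mono M (Nat.le_succ i)))
        have hlogd : Real.log 2 / δ ≤ (Kfun M (i + 1) : ℝ) := le_trans (Nat.le_ceil _) hKceil
        have hKpos' : (0 : ℝ) < (Kfun M (i + 1) : ℝ) := by
          have : 1 ≤ Kfun M (i + 1) := le_trans hK1 (Kfun_mono M (Nat.le_succ i))
          exact_mod_cast Nat.lt_of_lt_of_le Nat.zero_lt_one this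
        have h2 : Real.log 2 / (Kfun M (i + 1) : ℝ) ≤ δ := by
          rw [div_le_iff₀ hKpos']
          calc Real.log 2 = δ * (Real.log 2 / δ) := by field_simp
            _ ≤ δ * (Kfun M (i + 1) : ℝ) := mul_le_mul_of_nonneg_left hlogd hδpos.le
        exact le_trans (Dfun_succ_sub_le M i hK1) h2
      filter_upwards [Filter.eventually_ge_atTop (2 ^ (m₀ + c))] with n hn
      set m := Nat.log 2 n with hm
      have hn1 : 1 ≤ n := le_trans Nat.one_le_two_pow hn
      have hnR : (1 : ℝ) ≤ (n : ℝ) := by exact_mod_cast hn1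
      have hmc : m₀ + c ≤ m := (Nat.le_log_iff_pow_le one_lt_two (by omega)).2 hn
      have h2mnR : (2 : ℝ) ^ m ≤ (n : ℝ) := by
        exact_mod_cast Nat.pow_log_le_self 2 (by omega : n ≠ 0)
      have hn2m1R : (n : ℝ) < 2 ^ (m + 1) := by
        exact_mod_cast Nat.lt_pow_succ_log_self one_lt_two n
      have hsnpos : (0 : ℝ) < s * n := by positivity
      -- lower bound on the floor
      have h1 : (2 : ℝ) ≤ s * 2 ^ c := by
        rw [div_le_iff₀ hs] at hsc2; linarith
      have hpow : (2 : ℝ) ^ (m - c) * 2 ^ c = 2 ^ m := by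
        rw [← pow_add]; congr 1; omega
      have hgeR : (2 : ℝ) ^ (m - c) ≤ s * n := by
        have step1 : (2 : ℝ) * n ≤ (s * 2 ^ c) * n :=
          mul_le_mul_of_nonneg_right h1 (by positivity)
        have hmul : (2 : ℝ) ^ (m - c) * 2 ^ c ≤ (s * n) * 2 ^ c := by
          rw [hpow]; nlinarith [h2mnR, hnR]
        exact le_of_mul_le_mul_right hmul (pow_pos two_pos c)
      have hfl : 2 ^ (m - c) ≤ ⌊s * (n : ℝ)⌋₊ := Nat.le_floor (by push_cast; exact hgeR)
      have hfl0 : ⌊s * (n : ℝ)⌋₊ ≠ 0 :=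
        (lt_of_lt_of_le (pow_pos (by norm_num : 0 < 2) (m - c)) hfl).ne'
      set m' := Nat.log 2 ⌊s * (n : ℝ)⌋₊ with hm'
      have hlo : m - c ≤ m' := (Nat.le_log_iff_pow_le one_lt_two hfl0).2 hfl
      -- upper bound on the floor
      have hfltR : (⌊s * (n : ℝ)⌋₊ : ℝ) < 2 ^ (m + c + 1) := by
        calc (⌊s * (n : ℝ)⌋₊ : ℝ) ≤ s * n := Nat.floor_le hsnpos.le
          _ ≤ 2 ^ c * n := mul_le_mul_of_nonneg_right hsc (by positivity)
          _ < 2 ^ c * 2 ^ (m + 1) := mul_lt_mul_of_pos_left hn2m1R (pow_pos two_pos c)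
          _ = 2 ^ (m + c + 1) := by rw [← pow_add]; congr 1; omega
      have hflt : ⌊s * (n : ℝ)⌋₊ < 2 ^ (m + c + 1) := by exact_mod_cast hfltR
      have hhi : m' < m + c + 1 := (Nat.log_lt_iff_lt_pow one_lt_two hfl0).2 hflt
      -- combine via the window bound
      set a := m - c with ha
      have ham₀ : m₀ ≤ a := by omega
      have hwin := Dfun_window M δ a (fun i hi => hinc i (le_trans ham₀ hi)) (2 * c)
      have e1 : Dfun M a ≤ Dfun M m' := Dfun_mono M hlo
      have e2 : Dfun M m' ≤ Dfun M (a + 2 * c) := Dfun_mono M (by omega)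
      have e3 : Dfun M a ≤ Dfun M m := Dfun_mono M (by omega)
      have e4 : Dfun M m ≤ Dfun M (a + 2 * c) := Dfun_mono M (by omega)
      have habs : |Dfun M m' - Dfun M m| ≤ (2 * (c : ℝ)) * δ := by
        rw [abs_le]
        push_cast at hwin
        constructor <;> linarith
      have hfin : (2 * (c : ℝ)) * δ < ε := by
        have heq : (2 * (c : ℝ) + 2) * δ = ε := by
          rw [hδdef]; field_simp
        nlinarith [hδpos]
      rw [Real.norm_eq_abs]
      linarith
    have hcomp : Tendsto (fun n : ℕ => Real.exp
        (Dfun M (Nat.log 2 ⌊s * (n : ℝ)⌋₊) - Dfun M (Nat.log 2 n))) atTop (nhds 1) := by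
      have := (Real.continuous_exp.tendsto 0).comp key
      rwa [Real.exp_zero] at this
    exact hcomp.congr (fun n => Real.exp_sub _ _)
  · -- domination
    rw [ENNReal.tendsto_atTop_zero]
    intro ε hε
    obtain ⟨j, hj⟩ := ENNReal.exists_inv_nat_lt hε.ne'
    obtain ⟨m₁, hm₁⟩ := (Filter.tendsto_atTop_atTop.1 (Kfun_tendsto M)) (j + 1)
    refine ⟨2 ^ m₁, fun N hN => ?_⟩
    set m := Nat.log 2 N with hmdef
    have hN1 : 1 ≤ N := le_trans (Nat.one_le_two_pow) hN
    have hm : m₁ ≤ m := (Nat.le_log_iff_pow_le one_lt_two (by omega)).2 hN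
    have hK : j + 1 ≤ Kfun M m := hm₁ m hm
    have hKpos : 1 ≤ Kfun M m := le_trans (by omega) hK
    have hthr : M (Kfun M m - 1) ≤ N :=
      le_trans (Kfun_spec M m _ (by omega)) (Nat.pow_log_le_self 2 (by omega))
    have hKr : (0 : ℝ) < (Kfun M m : ℝ) := by exact_mod_cast hKpos
    -- ℓ N dominates N ^ (1/K m)
    have hdom : (N : ℝ) ^ ((Kfun M m : ℝ))⁻¹ ≤ Real.exp (Dfun M m) := by
      have h2 : (N : ℝ) ≤ (2 : ℝ) ^ (m + 1) := by
        exact_mod_cast (Nat.lt_pow_succ_log_self one_lt_two N).le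
      calc (N : ℝ) ^ ((Kfun M m : ℝ))⁻¹
          ≤ ((2 : ℝ) ^ (m + 1)) ^ ((Kfun M m : ℝ))⁻¹ :=
            Real.rpow_le_rpow (Nat.cast_nonneg N) h2 (by positivity)
        _ = Real.exp (Real.log ((2 : ℝ) ^ (m + 1)) * ((Kfun M m : ℝ))⁻¹) :=
            Real.rpow_def_of_pos (by positivity) _
        _ = Real.exp (((m : ℝ) + 1) * Real.log 2 * ((Kfun M m : ℝ))⁻¹) := by
            rw [Real.log_pow]; push_cast; ring_nf
        _ ≤ Real.exp (Dfun M m) := by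
            apply Real.exp_le_exp.2
            have hg := gfun_le_Dfun M m
            unfold gfun at hg
            rw [div_eq_mul_inv] at hg
            linarith
    have hsub : {ω | Real.exp (Dfun M m) < X N ω}
        ⊆ {ω | (N : ℝ) ^ ((Kfun M m : ℝ))⁻¹ < X N ω} :=
      fun ω hω => lt_of_le_of_lt hdom hω
    have hexp : ((Kfun M m - 1 : ℕ) : ℝ) + 1 = (Kfun M m : ℝ) := by
      rw [Nat.cast_sub hKpos]; push_cast; ring
    have hexp2 : ((Kfun M m - 1 : ℕ) : ℝ≥0∞) + 1 = (Kfun M m : ℝ≥0∞) := by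
      exact_mod_cast congrArg (Nat.cast : ℕ → ℝ≥0∞) (by omega : (Kfun M m - 1) + 1 = Kfun M m)
    have hbound := hM (Kfun M m - 1) N hthr
    rw [hexp, hexp2] at hbound
    calc P N {ω | Real.exp (Dfun M m) < X N ω}
        ≤ P N {ω | (N : ℝ) ^ ((Kfun M m : ℝ))⁻¹ < X N ω} := measure_mono hsub
      _ ≤ ((Kfun M m : ℝ≥0∞))⁻¹ := hbound
      _ ≤ ((j : ℝ≥0∞))⁻¹ := ENNReal.inv_le_inv' (by exact_mod_cast (by omega : j ≤ Kfun M m))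
      _ ≤ ε := hj.le

end
end
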